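/- The boxes B(L) = [−e^L, e^L] × [−e^L, e^L] × [−L, L] form a Følner family for Sol: the Lebesgue measure of B(L) equals 8·L·e^{2L} (Lebesgue measure on ℝ³ coincides with the Riemannian volume of Sol), and there is a universal constant C₀ > 0 such that for all L ≥ 1 the Lebesgue measure of the set { p ∈ ℝ³ : there exist q ∈ B(L) and q′ ∈ ℝ³ ∖ B(L) with d_Sol(p,q) ≤ 1 and d_Sol(p,q′) ≤ 1 } is at most C₀·e^{2L}; consequently the ratio of the measure of this boundary neighborhood to the measure of B(L) tends to 0 as L → ∞. -/

import Mathlib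

open Set

noncomputable section

/-- A path `γ : ℝ → E` is piecewise `C¹` on `[0,1]`. -/
def PiecewiseC1 {E : Type*} [NormedAddCommGroup E] [NormedSpace ℝ E] (γ : ℝ → E) : Prop :=
  ∃ (n : ℕ) (τ : ℕ → ℝ), τ 0 = 0 ∧ τ n = 1 ∧ (∀ i < n, τ i ≤ τ (i + 1)) ∧
    ∀ i < n, ContDiffOn ℝ 1 γ (Set.Icc (τ i) (τ (i + 1)))

/-- The `Sol` length of a path `γ(t) = (x(t), y(t), z(t))`, for the metric
`ds² = e^{-z} dx² + e^{z} dy² + dz²`. -/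
def solLength (γ : ℝ → ℝ × ℝ × ℝ) : ℝ :=
  ∫ t in (0:ℝ)..1,
    Real.sqrt (Real.exp (-(γ t).2.2) * (deriv (fun s => (γ s).1) t) ^ 2 +
      Real.exp ((γ t).2.2) * (deriv (fun s => (γ s).2.1) t) ^ 2 +
      (deriv (fun s => (γ s).2.2) t) ^ 2)

/-- The left-invariant distance on `Sol = ℝ³`. -/
def dSol (p q : ℝ × ℝ × ℝ) : ℝ :=
  sInf {ℓ : ℝ | ∃ γ : ℝ → ℝ × ℝ × ℝ,
    γ 0 = p ∧ γ 1 = q ∧ PiecewiseC1 γ ∧ solLength γ = ℓ}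

/-- Height function on `Sol`. -/
def solHeight (p : ℝ × ℝ × ℝ) : ℝ := p.2.2

/-- `f` is a `(K, C)`-quasi-isometric embedding with respect to the given distances. -/
def IsQIE {X Y : Type*} (dX : X → X → ℝ) (dY : Y → Y → ℝ) (K C : ℝ) (f : X → Y) : Prop :=
  ∀ a b : X, (1 / K) * dX a b - C ≤ dY (f a) (f b) ∧ dY (f a) (f b) ≤ K * dX a b + C

/-- `f` is a `(K, C)`-quasi-isometry with respect to the given distances. -/
def IsQI {X Y : Type*} (dX : X → X → ℝ) (dY : Y → Y → ℝ) (K C : ℝ) (f : X → Y) : Prop :=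
  IsQIE dX dY K C f ∧ ∀ y : Y, ∃ x : X, dY (f x) y ≤ C

/-- Two "metric spaces", given by distance functions, are quasi-isometric. -/
def QuasiIsometric {X Y : Type*} (dX : X → X → ℝ) (dY : Y → Y → ℝ) : Prop :=
  ∃ (K C : ℝ) (f : X → Y), 1 ≤ K ∧ 0 ≤ C ∧ IsQI dX dY K C f

open MeasureTheory

/-- The box `B(L) = [-e^L, e^L] × [-e^L, e^L] × [-L, L]` in `Sol = ℝ³`. -/
def solBox (L : ℝ) : Set (ℝ × ℝ × ℝ) :=
  Set.Icc (-Real.exp L) (Real.exp L) ×ˢ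
    (Set.Icc (-Real.exp L) (Real.exp L) ×ˢ Set.Icc (-L) L)

/-- The `1`-neighborhood (for `d_Sol`) of the boundary of the box `B(L)`: points within
`d_Sol`-distance 1 of both `B(L)` and its complement. -/
def solBoxBdryNbhd (L : ℝ) : Set (ℝ × ℝ × ℝ) :=
  {p : ℝ × ℝ × ℝ | (∃ q ∈ solBox L, dSol p q ≤ 1) ∧
    ∃ q' : ℝ × ℝ × ℝ, q' ∉ solBox L ∧ dSol p q' ≤ 1}

open intervalIntegral


def solF (γ : ℝ → ℝ × ℝ × ℝ) (t : ℝ) : ℝ :=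
  Real.sqrt (Real.exp (-(γ t).2.2) * (deriv (fun s => (γ s).1) t) ^ 2 +
      Real.exp ((γ t).2.2) * (deriv (fun s => (γ s).2.1) t) ^ 2 +
      (deriv (fun s => (γ s).2.2) t) ^ 2)

lemma solF_nonneg (γ : ℝ → ℝ × ℝ × ℝ) (t : ℝ) : 0 ≤ solF γ t := Real.sqrt_nonneg _

lemma sqrt_exp' (x : ℝ) : Real.sqrt (Real.exp x) = Real.exp (x/2) := by
  rw [show Real.exp x = (Real.exp (x/2))^2 by rw [sq, ← Real.exp_add]; ring_nf,
    Real.sqrt_sq (Real.exp_nonneg _)]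

lemma ae_imp_of_bad {P : ℝ → Prop} {s : Set ℝ} {b : ℝ}
    (h : ∀ t ∈ s, t ≠ b → P t) : ∀ᵐ t ∂(volume : Measure ℝ), t ∈ s → P t := by
  rw [ae_iff]
  refine measure_mono_null (fun t ht => ?_) (measure_singleton b)
  simp only [Set.mem_setOf_eq, Classical.not_imp] at ht
  simp only [Set.mem_singleton_iff]
  by_contra hne
  exact ht.2 (h t ht.1 hne)

lemma onePiece {γ : ℝ → ℝ × ℝ × ℝ} {a b : ℝ} (hab : a ≤ b)
    (hγ : ContDiffOn ℝ 1 γ (Set.Icc a b)) :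
    IntervalIntegrable (solF γ) volume a b ∧
    (∀ t ∈ Set.Icc a b, |(γ t).2.2 - (γ a).2.2| ≤ ∫ s in a..t, solF γ s) ∧
    (∀ m : ℝ, (∀ t ∈ Set.Icc a b, (γ t).2.2 ≤ m) →
      |(γ b).1 - (γ a).1| ≤ Real.exp (m/2) * ∫ s in a..b, solF γ s) ∧
    (∀ m : ℝ, (∀ t ∈ Set.Icc a b, -(γ t).2.2 ≤ m) →
      |(γ b).2.1 - (γ a).2.1| ≤ Real.exp (m/2) * ∫ s in a..b, solF γ s) := by
  rcases eq_or_lt_of_le hab with rfl | hab'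
  · refine ⟨IntervalIntegrable.refl, ?_, ?_, ?_⟩
    · intro t ht
      simp only [Set.mem_Icc] at ht
      have : t = a := le_antisymm ht.2 ht.1
      simp [this]
    · intro m _; simp
    · intro m _; simp
  have hu : UniqueDiffOn ℝ (Set.Icc a b) := uniqueDiffOn_Icc hab'
  have hx : ContDiffOn ℝ 1 (fun s => (γ s).1) (Set.Icc a b) :=
    contDiff_fst.comp_contDiffOn hγ
  have hy : ContDiffOn ℝ 1 (fun s => (γ s).2.1) (Set.Icc a b) :=
    (contDiff_fst.comp contDiff_snd).comp_contDiffOn hγ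
  have hz : ContDiffOn ℝ 1 (fun s => (γ s).2.2) (Set.Icc a b) :=
    (contDiff_snd.comp contDiff_snd).comp_contDiffOn hγ
  -- continuous derivatives within
  set x' := derivWithin (fun s => (γ s).1) (Set.Icc a b) with hx'def
  set y' := derivWithin (fun s => (γ s).2.1) (Set.Icc a b) with hy'def
  set z' := derivWithin (fun s => (γ s).2.2) (Set.Icc a b) with hz'def
  have hx'c : ContinuousOn x' (Set.Icc a b) := hx.continuousOn_derivWithin hu le_rfl
  have hy'c : ContinuousOn y' (Set.Icc a b) := hy.continuousOn_derivWithin hu le_rfl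
  have hz'c : ContinuousOn z' (Set.Icc a b) := hz.continuousOn_derivWithin hu le_rfl
  have hzc : ContinuousOn (fun s => (γ s).2.2) (Set.Icc a b) := hz.continuousOn
  have hder : ∀ (w : ℝ → ℝ), ContDiffOn ℝ 1 w (Set.Icc a b) → ∀ t ∈ Set.Ioo a b,
      HasDerivAt w (derivWithin w (Set.Icc a b) t) t ∧
        deriv w t = derivWithin w (Set.Icc a b) t := by
    intro w hw t ht
    have hmem : Set.Icc a b ∈ nhds t := Icc_mem_nhds ht.1 ht.2
    have hdw : DifferentiableAt ℝ w t :=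
      ((hw.differentiableOn one_ne_zero) t (Set.Ioo_subset_Icc_self ht)).differentiableAt hmem
    have heq : derivWithin w (Set.Icc a b) t = deriv w t :=
      hdw.derivWithin (hu t (Set.Ioo_subset_Icc_self ht))
    exact ⟨heq ▸ hdw.hasDerivAt, heq.symm⟩
  set G : ℝ → ℝ := fun t =>
    Real.sqrt (Real.exp (-(γ t).2.2) * (x' t) ^ 2 + Real.exp ((γ t).2.2) * (y' t) ^ 2 +
      (z' t) ^ 2) with hGdef
  have hGc : ContinuousOn G (Set.Icc a b) :=
    Real.continuous_sqrt.comp_continuousOn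
      ((((Real.continuous_exp.comp_continuousOn hzc.neg).mul (hx'c.pow 2)).add
        ((Real.continuous_exp.comp_continuousOn hzc).mul (hy'c.pow 2))).add (hz'c.pow 2))
  have hGnn : ∀ t, 0 ≤ G t := fun t => Real.sqrt_nonneg _
  have hFG : ∀ t ∈ Set.Ioo a b, solF γ t = G t := by
    intro t ht
    unfold solF
    rw [(hder _ hx t ht).2, (hder _ hy t ht).2, (hder _ hz t ht).2]
  -- integrability of solF on a..b
  have hGint : IntervalIntegrable G volume a b :=
    (by rwa [Set.uIcc_of_le hab] : ContinuousOn G (Set.uIcc a b)).intervalIntegrable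
  have haeb : ∀ᵐ s ∂(volume : Measure ℝ), s ∈ Set.uIoc a b → solF γ s = G s := by
    refine ae_imp_of_bad (b := b) (fun t ht hne => ?_)
    rw [Set.uIoc_of_le hab] at ht
    exact hFG t ⟨ht.1, lt_of_le_of_ne ht.2 hne⟩
  have hres : solF γ =ᵐ[volume.restrict (Set.uIoc a b)] G :=
    (ae_restrict_iff' measurableSet_uIoc).mpr haeb
  have hFint : IntervalIntegrable (solF γ) volume a b := hGint.congr_ae hres.symm
  have hIeq : ∀ t' ∈ Set.Icc a b, (∫ s in a..t', solF γ s) = ∫ s in a..t', G s := by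
    intro t' ht'
    refine integral_congr_ae (haeb.mono fun s h hm => h ?_)
    rw [Set.uIoc_of_le ht'.1] at hm
    rw [Set.uIoc_of_le hab]
    exact Set.Ioc_subset_Ioc_right ht'.2 hm
  have key : ∀ t' ∈ Set.Icc a b, ∀ (w : ℝ → ℝ) (c : ℝ), 0 ≤ c →
      ContDiffOn ℝ 1 w (Set.Icc a b) →
      (∀ s ∈ Set.Icc a b, |derivWithin w (Set.Icc a b) s| ≤ c * G s) →
      |w t' - w a| ≤ c * ∫ s in a..t', G s := by
    intro t' ht' w c hc hw hbound
    set w' := derivWithin w (Set.Icc a b) with hw'def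
    have hw'c : ContinuousOn w' (Set.Icc a b) := hw.continuousOn_derivWithin hu le_rfl
    have hsub : Set.Icc a t' ⊆ Set.Icc a b := Set.Icc_subset_Icc le_rfl ht'.2
    have h1 : IntervalIntegrable w' volume a t' :=
      (by rw [Set.uIcc_of_le ht'.1]; exact hw'c.mono hsub :
        ContinuousOn w' (Set.uIcc a t')).intervalIntegrable
    have hGt : IntervalIntegrable G volume a t' :=
      (by rw [Set.uIcc_of_le ht'.1]; exact hGc.mono hsub :
        ContinuousOn G (Set.uIcc a t')).intervalIntegrable
    have haet : ∀ᵐ s ∂(volume : Measure ℝ), s ∈ Set.uIoc a t' → deriv w s = w' s := by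
      refine ae_imp_of_bad (b := t') (fun s hs hne => ?_)
      rw [Set.uIoc_of_le ht'.1] at hs
      exact (hder w hw s ⟨hs.1, lt_of_lt_of_le (lt_of_le_of_ne hs.2 hne) ht'.2⟩).2
    have haet' : deriv w =ᵐ[volume.restrict (Set.uIoc a t')] w' :=
      (ae_restrict_iff' measurableSet_uIoc).mpr haet
    have hdw : IntervalIntegrable (deriv w) volume a t' := h1.congr_ae haet'.symm
    have hE : ∫ s in a..t', deriv w s = w t' - w a := by
      refine integral_eq_sub_of_hasDerivAt_of_le ht'.1 (hw.continuousOn.mono hsub)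
        (fun s hs => ?_) hdw
      have hs' : s ∈ Set.Ioo a b := ⟨hs.1, lt_of_lt_of_le hs.2 ht'.2⟩
      rw [(hder w hw s hs').2]
      exact (hder w hw s hs').1
    have hcongr : (∫ s in a..t', deriv w s) = ∫ s in a..t', w' s := integral_congr_ae haet
    rw [← hE, hcongr, abs_le]
    have hcG : IntervalIntegrable (fun s => c * G s) volume a t' := hGt.const_mul c
    constructor
    · have hmono := integral_mono_on ht'.1 (hGt.const_mul (-c)) h1
        (fun s hs => by
          have h2 := neg_le_of_abs_le (hbound s (hsub hs))
          simpa [neg_mul] using h2)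
      rw [intervalIntegral.integral_const_mul] at hmono
      linarith
    · have hmono := integral_mono_on ht'.1 h1 hcG
        (fun s hs => le_of_abs_le (hbound s (hsub hs)))
      rwa [intervalIntegral.integral_const_mul] at hmono
  have habs : ∀ (u v m2 : ℝ), 0 ≤ v → u^2 ≤ Real.exp m2 * v^2 → |u| ≤ Real.exp (m2/2) * v := by
    intro u v m2 hv h
    rw [← Real.sqrt_sq_eq_abs]
    calc Real.sqrt (u^2) ≤ Real.sqrt (Real.exp m2 * v^2) := Real.sqrt_le_sqrt h
      _ = Real.exp (m2/2) * v := by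
          rw [Real.sqrt_mul (Real.exp_pos m2).le, sqrt_exp', Real.sqrt_sq hv]
  have hGsq : ∀ t, (G t)^2 = Real.exp (-(γ t).2.2) * (x' t)^2 +
      Real.exp ((γ t).2.2) * (y' t)^2 + (z' t)^2 := by
    intro t
    simp only [hGdef]
    rw [Real.sq_sqrt]
    positivity
  refine ⟨hFint, ?_, ?_, ?_⟩
  · intro t ht
    rw [hIeq t ht]
    have h := key t ht (fun s => (γ s).2.2) 1 zero_le_one hz (fun s hs => ?_)
    · simpa using h
    · simp only [← hz'def]
      rw [one_mul, ← Real.sqrt_sq_eq_abs]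
      apply Real.sqrt_le_sqrt
      rw [← Real.sq_sqrt (show (0:ℝ) ≤ Real.exp (-(γ s).2.2) * (x' s)^2 +
        Real.exp ((γ s).2.2) * (y' s)^2 + (z' s)^2 by positivity)]
      rw [show Real.sqrt (Real.exp (-(γ s).2.2) * (x' s)^2 +
        Real.exp ((γ s).2.2) * (y' s)^2 + (z' s)^2) = G s from rfl]
      nlinarith [mul_nonneg (Real.exp_pos (-(γ s).2.2)).le (sq_nonneg (x' s)),
        mul_nonneg (Real.exp_pos ((γ s).2.2)).le (sq_nonneg (y' s)), hGsq s]
  · intro m hm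
    rw [hIeq b (Set.right_mem_Icc.mpr hab)]
    have h := key b (Set.right_mem_Icc.mpr hab) (fun s => (γ s).1) (Real.exp (m/2))
      (Real.exp_pos _).le hx (fun s hs => ?_)
    · simpa using h
    · simp only [← hx'def]
      refine habs _ _ m (hGnn s) ?_
      have hA : (0:ℝ) ≤ Real.exp (-(γ s).2.2) * (x' s)^2 := by positivity
      have h1 : Real.exp ((γ s).2.2) ≤ Real.exp m := Real.exp_le_exp.mpr (hm s hs)
      have h3 : Real.exp (-(γ s).2.2) * Real.exp ((γ s).2.2) = 1 := by
        rw [← Real.exp_add]; simp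
      have h4 : Real.exp ((γ s).2.2) * (Real.exp (-(γ s).2.2) * (x' s)^2) = (x' s)^2 := by
        rw [← mul_assoc, mul_comm (Real.exp ((γ s).2.2)), h3, one_mul]
      calc (x' s)^2 = Real.exp ((γ s).2.2) * (Real.exp (-(γ s).2.2) * (x' s)^2) := h4.symm
        _ ≤ Real.exp m * (Real.exp (-(γ s).2.2) * (x' s)^2) :=
            mul_le_mul_of_nonneg_right h1 hA
        _ ≤ Real.exp m * (G s)^2 := by
            rw [hGsq s]
            refine mul_le_mul_of_nonneg_left ?_ (Real.exp_pos m).le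
            nlinarith [mul_nonneg (Real.exp_pos ((γ s).2.2)).le (sq_nonneg (y' s)),
              sq_nonneg (z' s)]
  · intro m hm
    rw [hIeq b (Set.right_mem_Icc.mpr hab)]
    have h := key b (Set.right_mem_Icc.mpr hab) (fun s => (γ s).2.1) (Real.exp (m/2))
      (Real.exp_pos _).le hy (fun s hs => ?_)
    · simpa using h
    · simp only [← hy'def]
      refine habs _ _ m (hGnn s) ?_
      have hB : (0:ℝ) ≤ Real.exp ((γ s).2.2) * (y' s)^2 := by positivity
      have h1 : Real.exp (-(γ s).2.2) ≤ Real.exp m := Real.exp_le_exp.mpr (hm s hs)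
      have h3 : Real.exp ((γ s).2.2) * Real.exp (-(γ s).2.2) = 1 := by
        rw [← Real.exp_add]; simp
      have h4 : Real.exp (-(γ s).2.2) * (Real.exp ((γ s).2.2) * (y' s)^2) = (y' s)^2 := by
        rw [← mul_assoc, mul_comm (Real.exp (-(γ s).2.2)), h3, one_mul]
      calc (y' s)^2 = Real.exp (-(γ s).2.2) * (Real.exp ((γ s).2.2) * (y' s)^2) := h4.symm
        _ ≤ Real.exp m * (Real.exp ((γ s).2.2) * (y' s)^2) :=
            mul_le_mul_of_nonneg_right h1 hB
        _ ≤ Real.exp m * (G s)^2 := by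
            rw [hGsq s]
            refine mul_le_mul_of_nonneg_left ?_ (Real.exp_pos m).le
            nlinarith [mul_nonneg (Real.exp_pos (-(γ s).2.2)).le (sq_nonneg (x' s)),
              sq_nonneg (z' s)]

lemma solLength_eq (γ : ℝ → ℝ × ℝ × ℝ) : solLength γ = ∫ t in (0:ℝ)..1, solF γ t := rfl

lemma solLength_bounds {γ : ℝ → ℝ × ℝ × ℝ} (h : PiecewiseC1 γ) :
    0 ≤ solLength γ ∧
    |(γ 1).2.2 - (γ 0).2.2| ≤ solLength γ ∧
    |(γ 1).1 - (γ 0).1| ≤ Real.exp (((γ 0).2.2 + solLength γ)/2) * solLength γ ∧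
    |(γ 1).2.1 - (γ 0).2.1| ≤ Real.exp ((-(γ 0).2.2 + solLength γ)/2) * solLength γ := by
  obtain ⟨n, τ, h0, h1, hmono, hC1⟩ := h
  have hn : n ≠ 0 := by
    rintro rfl
    exact absurd (h0.symm.trans h1) (by norm_num)
  have hmono' : ∀ j, j ≤ n → ∀ i, i ≤ j → τ i ≤ τ j := by
    intro j
    induction j with
    | zero => intro _ i hi; interval_cases i; exact le_rfl
    | succ k ih =>
      intro hk i hi
      rcases eq_or_lt_of_le hi with rfl | hlt
      · exact le_rfl
      · exact le_trans (ih (le_trans (Nat.le_succ k) hk) i (Nat.lt_succ_iff.mp hlt))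
          (hmono k (Nat.lt_of_succ_le hk))
  have hτ0 : ∀ i, i ≤ n → 0 ≤ τ i := fun i hi => h0 ▸ hmono' i hi 0 (Nat.zero_le _)
  have hτ1 : ∀ i, i ≤ n → τ i ≤ 1 := fun i hi => h1 ▸ hmono' n le_rfl i hi
  have hA : ∀ i, i ≤ n → IntervalIntegrable (solF γ) volume 0 (τ i) ∧
      |(γ (τ i)).2.2 - (γ 0).2.2| ≤ ∫ s in (0:ℝ)..(τ i), solF γ s := by
    intro i
    induction i with
    | zero => intro _; rw [h0]; simp
    | succ k ih =>
      intro hk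
      have hkn : k < n := Nat.lt_of_succ_le hk
      obtain ⟨hint, hzk⟩ := ih hkn.le
      obtain ⟨hpint, hpz, _, _⟩ := onePiece (hmono k hkn) (hC1 k hkn)
      refine ⟨hint.trans hpint, ?_⟩
      have hadd := integral_add_adjacent_intervals hint hpint
      calc |(γ (τ (k+1))).2.2 - (γ 0).2.2|
          ≤ |(γ (τ (k+1))).2.2 - (γ (τ k)).2.2| + |(γ (τ k)).2.2 - (γ 0).2.2| :=
            abs_sub_le _ _ _
        _ ≤ (∫ s in (τ k)..(τ (k+1)), solF γ s) + ∫ s in (0:ℝ)..(τ k), solF γ s :=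
            add_le_add (hpz (τ (k+1)) (Set.right_mem_Icc.mpr (hmono k hkn))) hzk
        _ = ∫ s in (0:ℝ)..(τ (k+1)), solF γ s := by rw [add_comm]; exact hadd
  set ℓ := solLength γ with hldef
  have hl01 : IntervalIntegrable (solF γ) volume 0 1 := by
    have := (hA n le_rfl).1; rwa [h1] at this
  have hlval : ℓ = ∫ t in (0:ℝ)..1, solF γ t := solLength_eq γ
  have hlnn : 0 ≤ ℓ := by
    rw [hlval]
    exact intervalIntegral.integral_nonneg zero_le_one (fun u _ => solF_nonneg γ u)
  have hfind : ∀ t, 0 ≤ t → t ≤ 1 → ∃ i, i < n ∧ τ i ≤ t ∧ t ≤ τ (i+1) := by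
    intro t ht0 ht1
    set i := Nat.findGreatest (fun j => τ j ≤ t) (n-1) with hidef
    have hin : i ≤ n - 1 := Nat.findGreatest_le _
    have hin' : i < n := lt_of_le_of_lt hin (Nat.pred_lt hn)
    have hPi : τ i ≤ t := Nat.findGreatest_spec (P := fun j => τ j ≤ t) (Nat.zero_le _) (show τ 0 ≤ t by rw [h0]; exact ht0)
    by_cases hi : i = n - 1
    · refine ⟨i, hin', hPi, ?_⟩
      have hieq : i + 1 = n := by omega
      rw [hieq, h1]; exact ht1
    · refine ⟨i, hin', hPi, ?_⟩
      have hlt : i + 1 ≤ n - 1 := by omega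
      have := Nat.findGreatest_is_greatest (Nat.lt_succ_self i) hlt
      exact (not_le.mp this).le
  have hpartial : ∀ t, 0 ≤ t → t ≤ 1 →
      |(γ t).2.2 - (γ 0).2.2| ≤ ℓ := by
    intro t ht0 ht1
    obtain ⟨i, hin, hti, hti'⟩ := hfind t ht0 ht1
    obtain ⟨hint0, hz0⟩ := hA i hin.le
    obtain ⟨hpint, hpz, _, _⟩ := onePiece (hmono i hin) (hC1 i hin)
    have hs1 : IntervalIntegrable (solF γ) volume (τ i) t := by
      refine hpint.mono_set ?_
      rw [Set.uIcc_of_le hti, Set.uIcc_of_le (hmono i hin)]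
      exact Set.Icc_subset_Icc le_rfl hti'
    have hint0t : IntervalIntegrable (solF γ) volume 0 t := hint0.trans hs1
    have ht1int : IntervalIntegrable (solF γ) volume t 1 := by
      refine hl01.mono_set ?_
      rw [Set.uIcc_of_le ht1, Set.uIcc_of_le (zero_le_one)]
      exact Set.Icc_subset_Icc ht0 le_rfl
    have hsplit := integral_add_adjacent_intervals hint0t ht1int
    have h3 : 0 ≤ ∫ s in t..1, solF γ s :=
      intervalIntegral.integral_nonneg ht1 (fun u _ => solF_nonneg γ u)
    have hadd := integral_add_adjacent_intervals hint0 hs1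
    calc |(γ t).2.2 - (γ 0).2.2|
        ≤ |(γ t).2.2 - (γ (τ i)).2.2| + |(γ (τ i)).2.2 - (γ 0).2.2| := abs_sub_le _ _ _
      _ ≤ (∫ s in (τ i)..t, solF γ s) + ∫ s in (0:ℝ)..(τ i), solF γ s :=
          add_le_add (hpz t ⟨hti, hti'⟩) hz0
      _ = ∫ s in (0:ℝ)..t, solF γ s := by rw [add_comm]; exact hadd
      _ ≤ ℓ := by rw [hlval]; linarith [hsplit, h3]
  have hm1 : ∀ t' ∈ Set.Icc (0:ℝ) 1, (γ t').2.2 ≤ (γ 0).2.2 + ℓ := by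
    intro t' ht'
    have := abs_le.mp (hpartial t' ht'.1 ht'.2)
    linarith [this.2]
  have hm2 : ∀ t' ∈ Set.Icc (0:ℝ) 1, -(γ t').2.2 ≤ -(γ 0).2.2 + ℓ := by
    intro t' ht'
    have := abs_le.mp (hpartial t' ht'.1 ht'.2)
    linarith [this.1]
  have hBx : ∀ i, i ≤ n → |(γ (τ i)).1 - (γ 0).1| ≤
      Real.exp (((γ 0).2.2 + ℓ)/2) * ∫ s in (0:ℝ)..(τ i), solF γ s := by
    intro i
    induction i with
    | zero => intro _; rw [h0]; simp
    | succ k ih =>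
      intro hk
      have hkn : k < n := Nat.lt_of_succ_le hk
      obtain ⟨hint0, _⟩ := hA k hkn.le
      obtain ⟨hpint, _, hpx, _⟩ := onePiece (hmono k hkn) (hC1 k hkn)
      have hsub : Set.Icc (τ k) (τ (k+1)) ⊆ Set.Icc (0:ℝ) 1 :=
        Set.Icc_subset_Icc (hτ0 k hkn.le) (hτ1 (k+1) hkn)
      have hx1 := hpx ((γ 0).2.2 + ℓ) (fun t' ht' => hm1 t' (hsub ht'))
      have hadd := integral_add_adjacent_intervals hint0 hpint
      calc |(γ (τ (k+1))).1 - (γ 0).1|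
          ≤ |(γ (τ (k+1))).1 - (γ (τ k)).1| + |(γ (τ k)).1 - (γ 0).1| := abs_sub_le _ _ _
        _ ≤ Real.exp (((γ 0).2.2 + ℓ)/2) * (∫ s in (τ k)..(τ (k+1)), solF γ s) +
            Real.exp (((γ 0).2.2 + ℓ)/2) * ∫ s in (0:ℝ)..(τ k), solF γ s :=
            add_le_add hx1 (ih hkn.le)
        _ = Real.exp (((γ 0).2.2 + ℓ)/2) * ∫ s in (0:ℝ)..(τ (k+1)), solF γ s := by
            rw [← hadd]; ring
  have hBy : ∀ i, i ≤ n → |(γ (τ i)).2.1 - (γ 0).2.1| ≤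
      Real.exp ((-(γ 0).2.2 + ℓ)/2) * ∫ s in (0:ℝ)..(τ i), solF γ s := by
    intro i
    induction i with
    | zero => intro _; rw [h0]; simp
    | succ k ih =>
      intro hk
      have hkn : k < n := Nat.lt_of_succ_le hk
      obtain ⟨hint0, _⟩ := hA k hkn.le
      obtain ⟨hpint, _, _, hpy⟩ := onePiece (hmono k hkn) (hC1 k hkn)
      have hsub : Set.Icc (τ k) (τ (k+1)) ⊆ Set.Icc (0:ℝ) 1 :=
        Set.Icc_subset_Icc (hτ0 k hkn.le) (hτ1 (k+1) hkn)
      have hy1 := hpy (-(γ 0).2.2 + ℓ) (fun t' ht' => hm2 t' (hsub ht'))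
      have hadd := integral_add_adjacent_intervals hint0 hpint
      calc |(γ (τ (k+1))).2.1 - (γ 0).2.1|
          ≤ |(γ (τ (k+1))).2.1 - (γ (τ k)).2.1| + |(γ (τ k)).2.1 - (γ 0).2.1| := abs_sub_le _ _ _
        _ ≤ Real.exp ((-(γ 0).2.2 + ℓ)/2) * (∫ s in (τ k)..(τ (k+1)), solF γ s) +
            Real.exp ((-(γ 0).2.2 + ℓ)/2) * ∫ s in (0:ℝ)..(τ k), solF γ s :=
            add_le_add hy1 (ih hkn.le)
        _ = Real.exp ((-(γ 0).2.2 + ℓ)/2) * ∫ s in (0:ℝ)..(τ (k+1)), solF γ s := by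
            rw [← hadd]; ring
  refine ⟨hlnn, ?_, ?_, ?_⟩
  · have := (hA n le_rfl).2
    rw [h1] at this
    rwa [hlval]
  · have := hBx n le_rfl
    rw [h1] at this
    rwa [hlval]
  · have := hBy n le_rfl
    rw [h1] at this
    rwa [hlval]



lemma line_piecewiseC1 (p q : ℝ × ℝ × ℝ) : PiecewiseC1 (fun t : ℝ => p + t • (q - p)) := by
  refine ⟨1, fun i => (i : ℝ), by norm_num, by norm_num, ?_, ?_⟩
  · intro i hi; interval_cases i; norm_num
  · intro i hi; interval_cases i
    exact (contDiff_const.add (contDiff_id.smul contDiff_const)).contDiffOn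

lemma dSol_le_one_bounds {p q : ℝ × ℝ × ℝ} (h : dSol p q ≤ 1) :
    |q.2.2 - p.2.2| ≤ 2 ∧ |q.1 - p.1| ≤ 2 * Real.exp ((p.2.2 + 2)/2) ∧
    |q.2.1 - p.2.1| ≤ 2 * Real.exp ((-p.2.2 + 2)/2) := by
  set S := {ℓ : ℝ | ∃ γ : ℝ → ℝ × ℝ × ℝ,
    γ 0 = p ∧ γ 1 = q ∧ PiecewiseC1 γ ∧ solLength γ = ℓ} with hS
  have hne : S.Nonempty := by
    refine ⟨solLength (fun t : ℝ => p + t • (q - p)),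
      ⟨fun t : ℝ => p + t • (q - p), by simp, by simp, line_piecewiseC1 p q, rfl⟩⟩
  have hlt : sInf S < 2 := lt_of_le_of_lt h one_lt_two
  obtain ⟨ℓ, hmem, hl2⟩ := exists_lt_of_csInf_lt hne hlt
  obtain ⟨γ, hg0, hg1, hpc, hlen⟩ := hmem
  obtain ⟨hnn, hz, hx, hy⟩ := solLength_bounds hpc
  rw [hg0, hg1, hlen] at hz hx hy
  rw [hlen] at hnn
  have hexp1 : Real.exp ((p.2.2 + ℓ)/2) ≤ Real.exp ((p.2.2 + 2)/2) :=
    Real.exp_le_exp.mpr (by linarith)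
  have hexp2 : Real.exp ((-p.2.2 + ℓ)/2) ≤ Real.exp ((-p.2.2 + 2)/2) :=
    Real.exp_le_exp.mpr (by linarith)
  refine ⟨le_trans hz hl2.le, ?_, ?_⟩
  · calc |q.1 - p.1| ≤ Real.exp ((p.2.2 + ℓ)/2) * ℓ := hx
      _ ≤ Real.exp ((p.2.2 + 2)/2) * ℓ := mul_le_mul_of_nonneg_right hexp1 hnn
      _ ≤ Real.exp ((p.2.2 + 2)/2) * 2 := mul_le_mul_of_nonneg_left hl2.le (Real.exp_pos _).le
      _ = 2 * Real.exp ((p.2.2 + 2)/2) := mul_comm _ _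
  · calc |q.2.1 - p.2.1| ≤ Real.exp ((-p.2.2 + ℓ)/2) * ℓ := hy
      _ ≤ Real.exp ((-p.2.2 + 2)/2) * ℓ := mul_le_mul_of_nonneg_right hexp2 hnn
      _ ≤ Real.exp ((-p.2.2 + 2)/2) * 2 := mul_le_mul_of_nonneg_left hl2.le (Real.exp_pos _).le
      _ = 2 * Real.exp ((-p.2.2 + 2)/2) := mul_comm _ _

lemma mem_solBox {L : ℝ} {q : ℝ × ℝ × ℝ} :
    q ∈ solBox L ↔ |q.1| ≤ Real.exp L ∧ |q.2.1| ≤ Real.exp L ∧ |q.2.2| ≤ L := by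
  constructor
  · intro hq
    simp only [solBox, Set.mem_prod, Set.mem_Icc] at hq
    exact ⟨abs_le.mpr hq.1, abs_le.mpr hq.2.1, abs_le.mpr hq.2.2⟩
  · intro hq
    simp only [solBox, Set.mem_prod, Set.mem_Icc]
    exact ⟨abs_le.mp hq.1, abs_le.mp hq.2.1, abs_le.mp hq.2.2⟩

lemma vol_box (a b c d e f : ℝ) :
    volume ((Set.Icc a b ×ˢ (Set.Icc c d ×ˢ Set.Icc e f)) : Set (ℝ × ℝ × ℝ)) =
      ENNReal.ofReal (b - a) * (ENNReal.ofReal (d - c) * ENNReal.ofReal (f - e)) := by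
  rw [MeasureTheory.Measure.volume_eq_prod, MeasureTheory.Measure.prod_prod,
    MeasureTheory.Measure.volume_eq_prod, MeasureTheory.Measure.prod_prod,
    Real.volume_Icc, Real.volume_Icc, Real.volume_Icc]

lemma nbhd_subset {L : ℝ} (hL : 1 ≤ L) :
    solBoxBdryNbhd L ⊆
      (Set.Icc (-(Real.exp L + 2*Real.exp ((L+4)/2))) (Real.exp L + 2*Real.exp ((L+4)/2)) ×ˢ
        (Set.Icc (-(Real.exp L + 2*Real.exp ((L+4)/2))) (Real.exp L + 2*Real.exp ((L+4)/2)) ×ˢ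
          Set.Icc (L-2) (L+2))) ∪
      ((Set.Icc (-(Real.exp L + 2*Real.exp ((L+4)/2))) (Real.exp L + 2*Real.exp ((L+4)/2)) ×ˢ
        (Set.Icc (-(Real.exp L + 2*Real.exp ((L+4)/2))) (Real.exp L + 2*Real.exp ((L+4)/2)) ×ˢ
          Set.Icc (-(L+2)) (-(L-2)))) ∪
      ((Set.Icc (Real.exp L - 2*Real.exp ((L+4)/2)) (Real.exp L + 2*Real.exp ((L+4)/2)) ×ˢ
        (Set.Icc (-(Real.exp L + 2*Real.exp ((L+4)/2))) (Real.exp L + 2*Real.exp ((L+4)/2)) ×ˢ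
          Set.Icc (-(L+2)) (L+2))) ∪
      ((Set.Icc (-(Real.exp L + 2*Real.exp ((L+4)/2))) (-(Real.exp L - 2*Real.exp ((L+4)/2))) ×ˢ
        (Set.Icc (-(Real.exp L + 2*Real.exp ((L+4)/2))) (Real.exp L + 2*Real.exp ((L+4)/2)) ×ˢ
          Set.Icc (-(L+2)) (L+2))) ∪
      ((Set.Icc (-(Real.exp L + 2*Real.exp ((L+4)/2))) (Real.exp L + 2*Real.exp ((L+4)/2)) ×ˢ
        (Set.Icc (Real.exp L - 2*Real.exp ((L+4)/2)) (Real.exp L + 2*Real.exp ((L+4)/2)) ×ˢ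
          Set.Icc (-(L+2)) (L+2))) ∪
      (Set.Icc (-(Real.exp L + 2*Real.exp ((L+4)/2))) (Real.exp L + 2*Real.exp ((L+4)/2)) ×ˢ
        (Set.Icc (-(Real.exp L + 2*Real.exp ((L+4)/2))) (-(Real.exp L - 2*Real.exp ((L+4)/2))) ×ˢ
          Set.Icc (-(L+2)) (L+2))))))) := by
  intro p hp
  obtain ⟨⟨q, hqbox, hdq⟩, ⟨q', hq'box, hdq'⟩⟩ := hp
  set E := Real.exp L with hE
  set K := 2*Real.exp ((L+4)/2) with hK
  obtain ⟨b1, b2, b3⟩ := dSol_le_one_bounds hdq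
  obtain ⟨b1', b2', b3'⟩ := dSol_le_one_bounds hdq'
  obtain ⟨hq1, hq2, hq3⟩ := mem_solBox.mp hqbox
  -- bounds on p
  have hpz : |p.2.2| ≤ L + 2 := by
    have h := abs_sub_abs_le_abs_sub p.2.2 q.2.2
    rw [abs_sub_comm] at h
    linarith
  have hKp : 2*Real.exp ((p.2.2 + 2)/2) ≤ K := by
    rw [hK]
    have : Real.exp ((p.2.2 + 2)/2) ≤ Real.exp ((L+4)/2) :=
      Real.exp_le_exp.mpr (by have := abs_le.mp hpz; linarith [this.2])
    linarith
  have hKm : 2*Real.exp ((-p.2.2 + 2)/2) ≤ K := by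
    rw [hK]
    have : Real.exp ((-p.2.2 + 2)/2) ≤ Real.exp ((L+4)/2) :=
      Real.exp_le_exp.mpr (by have := abs_le.mp hpz; linarith [this.1])
    linarith
  have hpx : |p.1| ≤ E + K := by
    have h := abs_sub_abs_le_abs_sub p.1 q.1
    rw [abs_sub_comm] at h
    linarith
  have hpy : |p.2.1| ≤ E + K := by
    have h := abs_sub_abs_le_abs_sub p.2.1 q.2.1
    rw [abs_sub_comm] at h
    linarith
  have hpz' := abs_le.mp hpz
  have hpx' := abs_le.mp hpx
  have hpy' := abs_le.mp hpy
  have hcase : ¬(|q'.1| ≤ E) ∨ ¬(|q'.2.1| ≤ E) ∨ ¬(|q'.2.2| ≤ L) := by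
    have := mem_solBox (L := L) (q := q')
    tauto
  simp only [Set.mem_union, Set.mem_prod, Set.mem_Icc]
  rcases hcase with hc | hc | hc
  · -- x-exit
    push_neg at hc
    have h := abs_sub_abs_le_abs_sub q'.1 p.1
    have hlow : E - K < |p.1| := by linarith
    rcases lt_abs.mp hlow with h' | h'
    · right; right; left
      exact ⟨⟨by linarith, by linarith⟩, ⟨hpy'.1, hpy'.2⟩, hpz'.1, hpz'.2⟩
    · right; right; right; left
      exact ⟨⟨hpx'.1, by linarith⟩, ⟨hpy'.1, hpy'.2⟩, hpz'.1, hpz'.2⟩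
  · -- y-exit
    push_neg at hc
    have h := abs_sub_abs_le_abs_sub q'.2.1 p.2.1
    have hlow : E - K < |p.2.1| := by linarith
    rcases lt_abs.mp hlow with h' | h'
    · right; right; right; right; left
      exact ⟨⟨hpx'.1, hpx'.2⟩, ⟨by linarith, by linarith⟩, hpz'.1, hpz'.2⟩
    · right; right; right; right; right
      exact ⟨⟨hpx'.1, hpx'.2⟩, ⟨hpy'.1, by linarith⟩, hpz'.1, hpz'.2⟩
  · -- z-exit
    push_neg at hc
    have h := abs_sub_abs_le_abs_sub q'.2.2 p.2.2
    have hlow : L - 2 < |p.2.2| := by linarith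
    rcases lt_abs.mp hlow with h' | h'
    · left
      exact ⟨⟨hpx'.1, hpx'.2⟩, ⟨hpy'.1, hpy'.2⟩, by linarith, hpz'.2⟩
    · right; left
      exact ⟨⟨hpx'.1, hpx'.2⟩, ⟨hpy'.1, hpy'.2⟩, hpz'.1, by linarith⟩


/-- **Lemma.** The boxes `B(L)` form a Følner family for `Sol`: the (Riemannian = Lebesgue)
volume of `B(L)` is `8·L·e^{2L}`, while the volume of the `1`-neighborhood of its boundary is
`O(e^{2L})`; consequently the ratio of the two tends to `0` as `L → ∞`. -/
theorem sol_boxes_folner :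
    (∀ L : ℝ, 0 < L →
      volume (solBox L) = ENNReal.ofReal (8 * L * Real.exp (2 * L))) ∧
    ∃ C₀ : ℝ, 0 < C₀ ∧
      (∀ L : ℝ, 1 ≤ L →
        volume (solBoxBdryNbhd L) ≤ ENNReal.ofReal (C₀ * Real.exp (2 * L))) ∧
      Filter.Tendsto
        (fun L : ℝ => (volume (solBoxBdryNbhd L)).toReal / (volume (solBox L)).toReal)
        Filter.atTop (nhds 0) := by
  have hvol : ∀ L : ℝ, 0 < L →
      volume (solBox L) = ENNReal.ofReal (8 * L * Real.exp (2 * L)) := by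
    intro L hL
    rw [solBox, vol_box]
    have hb : (0:ℝ) ≤ Real.exp L - -Real.exp L := by nlinarith [Real.exp_pos L]
    rw [← ENNReal.ofReal_mul hb, ← ENNReal.ofReal_mul hb]
    congr 1
    have h2 : Real.exp L * Real.exp L = Real.exp (2*L) := by
      rw [← Real.exp_add]; ring_nf
    nlinarith [h2]
  have hbd : ∀ L : ℝ, 1 ≤ L →
      volume (solBoxBdryNbhd L) ≤ ENNReal.ofReal (30000 * Real.exp (2 * L)) := by
    intro L hL
    have hE0 : (0:ℝ) < Real.exp L := Real.exp_pos L
    have hE2 : Real.exp L * Real.exp L = Real.exp (2*L) := by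
      rw [← Real.exp_add]; ring_nf
    have he1 : Real.exp 1 < 2.7182818286 := Real.exp_one_lt_d9
    have he2' : Real.exp 2 = Real.exp 1 * Real.exp 1 := by rw [← Real.exp_add]; norm_num
    have he2lt : Real.exp 2 < 7.4 := by nlinarith [Real.exp_pos 1]
    have hKE : 2*Real.exp ((L+4)/2) ≤ 15*Real.exp L := by
      have h : Real.exp ((L+4)/2) ≤ Real.exp (L + 3/2) := Real.exp_le_exp.mpr (by linarith)
      rw [Real.exp_add] at h
      have h32 : Real.exp (3/2 : ℝ) ≤ Real.exp 2 := Real.exp_le_exp.mpr (by norm_num)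
      nlinarith [Real.exp_pos ((3:ℝ)/2)]
    have hL4 : 2*L + 4 ≤ 4*Real.exp (L/2) := by nlinarith [Real.add_one_le_exp (L/2)]
    have hxp : Real.exp ((L+4)/2) * Real.exp (L/2) * Real.exp L
        = Real.exp (2*L) * Real.exp 2 := by
      rw [← Real.exp_add, ← Real.exp_add, ← Real.exp_add]; ring_nf
    -- bounds for the three kinds of boxes
    have hA : ∀ e f : ℝ, f - e ≤ 4 →
        volume ((Set.Icc (-(Real.exp L + 2*Real.exp ((L+4)/2))) (Real.exp L + 2*Real.exp ((L+4)/2)) ×ˢ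
          (Set.Icc (-(Real.exp L + 2*Real.exp ((L+4)/2))) (Real.exp L + 2*Real.exp ((L+4)/2)) ×ˢ
            Set.Icc e f)) : Set (ℝ × ℝ × ℝ)) ≤ ENNReal.ofReal (5000 * Real.exp (2*L)) := by
      intro e f hef
      rw [vol_box]
      have h1 : ENNReal.ofReal ((Real.exp L + 2*Real.exp ((L+4)/2)) - -(Real.exp L + 2*Real.exp ((L+4)/2)))
          ≤ ENNReal.ofReal (32*Real.exp L) := ENNReal.ofReal_le_ofReal (by nlinarith)
      have h3 : ENNReal.ofReal (f - e) ≤ ENNReal.ofReal (4:ℝ) := ENNReal.ofReal_le_ofReal hef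
      calc ENNReal.ofReal ((Real.exp L + 2*Real.exp ((L+4)/2)) - -(Real.exp L + 2*Real.exp ((L+4)/2))) *
            (ENNReal.ofReal ((Real.exp L + 2*Real.exp ((L+4)/2)) - -(Real.exp L + 2*Real.exp ((L+4)/2))) *
              ENNReal.ofReal (f - e))
          ≤ ENNReal.ofReal (32*Real.exp L) * (ENNReal.ofReal (32*Real.exp L) * ENNReal.ofReal (4:ℝ)) :=
            mul_le_mul' h1 (mul_le_mul' h1 h3)
        _ = ENNReal.ofReal (32*Real.exp L * (32*Real.exp L * 4)) := by
            rw [← ENNReal.ofReal_mul (by positivity), ← ENNReal.ofReal_mul (by positivity)]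
        _ ≤ ENNReal.ofReal (5000 * Real.exp (2*L)) :=
            ENNReal.ofReal_le_ofReal (by nlinarith)
    have hB : ∀ a b : ℝ, b - a ≤ 4*Real.exp ((L+4)/2) →
        volume ((Set.Icc a b ×ˢ
          (Set.Icc (-(Real.exp L + 2*Real.exp ((L+4)/2))) (Real.exp L + 2*Real.exp ((L+4)/2)) ×ˢ
            Set.Icc (-(L+2)) (L+2))) : Set (ℝ × ℝ × ℝ)) ≤ ENNReal.ofReal (5000 * Real.exp (2*L)) := by
      intro a b hab
      rw [vol_box]
      have h1 : ENNReal.ofReal (b - a) ≤ ENNReal.ofReal (4*Real.exp ((L+4)/2)) :=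
        ENNReal.ofReal_le_ofReal hab
      have h2 : ENNReal.ofReal ((Real.exp L + 2*Real.exp ((L+4)/2)) - -(Real.exp L + 2*Real.exp ((L+4)/2)))
          ≤ ENNReal.ofReal (32*Real.exp L) := ENNReal.ofReal_le_ofReal (by nlinarith)
      have h3 : ENNReal.ofReal ((L+2) - -(L+2)) ≤ ENNReal.ofReal (4*Real.exp (L/2)) :=
        ENNReal.ofReal_le_ofReal (by linarith)
      calc ENNReal.ofReal (b - a) *
            (ENNReal.ofReal ((Real.exp L + 2*Real.exp ((L+4)/2)) - -(Real.exp L + 2*Real.exp ((L+4)/2))) *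
              ENNReal.ofReal ((L+2) - -(L+2)))
          ≤ ENNReal.ofReal (4*Real.exp ((L+4)/2)) *
            (ENNReal.ofReal (32*Real.exp L) * ENNReal.ofReal (4*Real.exp (L/2))) :=
            mul_le_mul' h1 (mul_le_mul' h2 h3)
        _ = ENNReal.ofReal (4*Real.exp ((L+4)/2) * (32*Real.exp L * (4*Real.exp (L/2)))) := by
            rw [← ENNReal.ofReal_mul (by positivity), ← ENNReal.ofReal_mul (by positivity)]
        _ ≤ ENNReal.ofReal (5000 * Real.exp (2*L)) :=
            ENNReal.ofReal_le_ofReal (by nlinarith [Real.exp_pos (2*L)])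
    have hC : ∀ c d : ℝ, d - c ≤ 4*Real.exp ((L+4)/2) →
        volume ((Set.Icc (-(Real.exp L + 2*Real.exp ((L+4)/2))) (Real.exp L + 2*Real.exp ((L+4)/2)) ×ˢ
          (Set.Icc c d ×ˢ Set.Icc (-(L+2)) (L+2))) : Set (ℝ × ℝ × ℝ)) ≤
          ENNReal.ofReal (5000 * Real.exp (2*L)) := by
      intro c d hcd
      rw [vol_box]
      have h1 : ENNReal.ofReal ((Real.exp L + 2*Real.exp ((L+4)/2)) - -(Real.exp L + 2*Real.exp ((L+4)/2)))
          ≤ ENNReal.ofReal (32*Real.exp L) := ENNReal.ofReal_le_ofReal (by nlinarith)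
      have h2 : ENNReal.ofReal (d - c) ≤ ENNReal.ofReal (4*Real.exp ((L+4)/2)) :=
        ENNReal.ofReal_le_ofReal hcd
      have h3 : ENNReal.ofReal ((L+2) - -(L+2)) ≤ ENNReal.ofReal (4*Real.exp (L/2)) :=
        ENNReal.ofReal_le_ofReal (by linarith)
      calc ENNReal.ofReal ((Real.exp L + 2*Real.exp ((L+4)/2)) - -(Real.exp L + 2*Real.exp ((L+4)/2))) *
            (ENNReal.ofReal (d - c) * ENNReal.ofReal ((L+2) - -(L+2)))
          ≤ ENNReal.ofReal (32*Real.exp L) *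
            (ENNReal.ofReal (4*Real.exp ((L+4)/2)) * ENNReal.ofReal (4*Real.exp (L/2))) :=
            mul_le_mul' h1 (mul_le_mul' h2 h3)
        _ = ENNReal.ofReal (32*Real.exp L * (4*Real.exp ((L+4)/2) * (4*Real.exp (L/2)))) := by
            rw [← ENNReal.ofReal_mul (by positivity), ← ENNReal.ofReal_mul (by positivity)]
        _ ≤ ENNReal.ofReal (5000 * Real.exp (2*L)) :=
            ENNReal.ofReal_le_ofReal (by nlinarith [Real.exp_pos (2*L)])
    calc volume (solBoxBdryNbhd L) ≤ _ := measure_mono (nbhd_subset hL)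
      _ ≤ _ := measure_union_le _ _
      _ ≤ ENNReal.ofReal (5000 * Real.exp (2*L)) + _ :=
          add_le_add (hA (L-2) (L+2) (by linarith)) le_rfl
      _ ≤ ENNReal.ofReal (5000 * Real.exp (2*L)) + _ :=
          add_le_add le_rfl (measure_union_le _ _)
      _ ≤ ENNReal.ofReal (5000 * Real.exp (2*L)) +
            (ENNReal.ofReal (5000 * Real.exp (2*L)) + _) :=
          add_le_add le_rfl (add_le_add (hA (-(L+2)) (-(L-2)) (by linarith)) le_rfl)
      _ ≤ ENNReal.ofReal (5000 * Real.exp (2*L)) +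
            (ENNReal.ofReal (5000 * Real.exp (2*L)) + _) :=
          add_le_add le_rfl (add_le_add le_rfl (measure_union_le _ _))
      _ ≤ ENNReal.ofReal (5000 * Real.exp (2*L)) +
            (ENNReal.ofReal (5000 * Real.exp (2*L)) +
              (ENNReal.ofReal (5000 * Real.exp (2*L)) + _)) :=
          add_le_add le_rfl (add_le_add le_rfl
            (add_le_add (hB (Real.exp L - 2*Real.exp ((L+4)/2))
              (Real.exp L + 2*Real.exp ((L+4)/2)) (by linarith)) le_rfl))
      _ ≤ ENNReal.ofReal (5000 * Real.exp (2*L)) +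
            (ENNReal.ofReal (5000 * Real.exp (2*L)) +
              (ENNReal.ofReal (5000 * Real.exp (2*L)) + _)) :=
          add_le_add le_rfl (add_le_add le_rfl (add_le_add le_rfl (measure_union_le _ _)))
      _ ≤ ENNReal.ofReal (5000 * Real.exp (2*L)) +
            (ENNReal.ofReal (5000 * Real.exp (2*L)) +
              (ENNReal.ofReal (5000 * Real.exp (2*L)) +
                (ENNReal.ofReal (5000 * Real.exp (2*L)) + _))) :=
          add_le_add le_rfl (add_le_add le_rfl (add_le_add le_rfl
            (add_le_add (hB (-(Real.exp L + 2*Real.exp ((L+4)/2)))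
              (-(Real.exp L - 2*Real.exp ((L+4)/2))) (by linarith)) le_rfl)))
      _ ≤ ENNReal.ofReal (5000 * Real.exp (2*L)) +
            (ENNReal.ofReal (5000 * Real.exp (2*L)) +
              (ENNReal.ofReal (5000 * Real.exp (2*L)) +
                (ENNReal.ofReal (5000 * Real.exp (2*L)) + _))) :=
          add_le_add le_rfl (add_le_add le_rfl (add_le_add le_rfl
            (add_le_add le_rfl (measure_union_le _ _))))
      _ ≤ ENNReal.ofReal (5000 * Real.exp (2*L)) +
            (ENNReal.ofReal (5000 * Real.exp (2*L)) +
              (ENNReal.ofReal (5000 * Real.exp (2*L)) +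
                (ENNReal.ofReal (5000 * Real.exp (2*L)) +
                  (ENNReal.ofReal (5000 * Real.exp (2*L)) +
                    ENNReal.ofReal (5000 * Real.exp (2*L)))))) :=
          add_le_add le_rfl (add_le_add le_rfl (add_le_add le_rfl (add_le_add le_rfl
            (add_le_add (hC (Real.exp L - 2*Real.exp ((L+4)/2))
                (Real.exp L + 2*Real.exp ((L+4)/2)) (by linarith))
              (hC (-(Real.exp L + 2*Real.exp ((L+4)/2)))
                (-(Real.exp L - 2*Real.exp ((L+4)/2))) (by linarith))))))
      _ ≤ ENNReal.ofReal (30000 * Real.exp (2*L)) := by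
          rw [← ENNReal.ofReal_add (by positivity) (by positivity),
            ← ENNReal.ofReal_add (by positivity) (by positivity),
            ← ENNReal.ofReal_add (by positivity) (by positivity),
            ← ENNReal.ofReal_add (by positivity) (by positivity),
            ← ENNReal.ofReal_add (by positivity) (by positivity)]
          exact ENNReal.ofReal_le_ofReal (by nlinarith [Real.exp_pos (2*L)])
  refine ⟨hvol, 30000, by norm_num, hbd, ?_⟩
  have htend : Filter.Tendsto (fun L : ℝ => 30000 / (8*L)) Filter.atTop (nhds 0) :=
    Filter.Tendsto.div_atTop tendsto_const_nhds
      (Filter.Tendsto.const_mul_atTop (by norm_num) Filter.tendsto_id)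
  refine tendsto_of_tendsto_of_tendsto_of_le_of_le' tendsto_const_nhds htend ?_ ?_
  · exact Filter.Eventually.of_forall
      (fun L => div_nonneg ENNReal.toReal_nonneg ENNReal.toReal_nonneg)
  · filter_upwards [Filter.eventually_ge_atTop 1] with L hL1
    have hL0 : (0:ℝ) < L := by linarith
    have h1 : (volume (solBoxBdryNbhd L)).toReal ≤ 30000 * Real.exp (2*L) :=
      ENNReal.toReal_le_of_le_ofReal (by positivity) (hbd L hL1)
    rw [hvol L hL0, ENNReal.toReal_ofReal (by positivity)]
    have hden : (0:ℝ) < 8 * L * Real.exp (2*L) := by positivity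
    calc (volume (solBoxBdryNbhd L)).toReal / (8*L*Real.exp (2*L))
        ≤ (30000 * Real.exp (2*L)) / (8*L*Real.exp (2*L)) := by gcongr
      _ = 30000 / (8*L) := mul_div_mul_right _ _ (Real.exp_ne_zero (2*L))

end
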